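/- Let H be a real Hilbert space, A : D(A) ⊆ H → H self-adjoint, and z : [0,T] → D(A) a C¹ solution of z'(t) = -A z(t) with z(0) ≠ 0. Then ‖z(0)‖ ≤ exp( (⟨A z(0), z(0)⟩ / ‖z(0)‖²) · T ) · ‖z(T)‖. -/

import Mathlib

open Set Filter
open scoped RealInnerProductSpace Topology
lemma deriv_inner_Az {H : Type*} [NormedAddCommGroup H] [InnerProductSpace ℝ H]
    (A : H →ₗ[ℝ] H) (hA : LinearMap.IsSymmetric A) (s : Set ℝ) (z : ℝ → H) (t : ℝ)
    (hzt : HasDerivWithinAt z (-(A (z t))) s t)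
    (hc : Tendsto (fun y => A (z y)) (𝓝[s] t) (𝓝 (A (z t)))) :
    HasDerivWithinAt (fun y => ⟪A (z y), z y⟫) (-(2 * ‖A (z t)‖ ^ 2)) s t := by
  rw [hasDerivWithinAt_iff_tendsto_slope]
  have hslope : Tendsto (slope z t) (𝓝[s \ {t}] t) (𝓝 (-(A (z t)))) :=
    hasDerivWithinAt_iff_tendsto_slope.mp hzt
  have hc' : Tendsto (fun y => A (z y)) (𝓝[s \ {t}] t) (𝓝 (A (z t))) :=
    hc.mono_left (nhdsWithin_mono _ diff_subset)
  have key : Tendsto (fun y => ⟪A (z y), slope z t y⟫ + ⟪slope z t y, A (z t)⟫)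
      (𝓝[s \ {t}] t) (𝓝 (⟪A (z t), -(A (z t))⟫ + ⟪-(A (z t)), A (z t)⟫)) :=
    (hc'.inner hslope).add (hslope.inner tendsto_const_nhds)
  have heq : ∀ y, slope (fun y => ⟪A (z y), z y⟫) t y
      = ⟪A (z y), slope z t y⟫ + ⟪slope z t y, A (z t)⟫ := by
    intro y
    have h1 : ⟪A (z y), z y⟫ - ⟪A (z t), z t⟫
        = ⟪A (z y), z y - z t⟫ + ⟪z y - z t, A (z t)⟫ := by
      have h2 : ⟪A (z y), z t⟫ = ⟪z y, A (z t)⟫ := hA _ _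
      have h3 : ⟪A (z t), z t⟫ = ⟪z t, A (z t)⟫ := real_inner_comm _ _
      rw [inner_sub_right, inner_sub_left]
      linarith
    rw [slope_def_module, slope_def_module, real_inner_smul_right, real_inner_smul_left,
      smul_eq_mul, h1]
    ring
  have hval : ⟪A (z t), -(A (z t))⟫ + ⟪-(A (z t)), A (z t)⟫ = -(2 * ‖A (z t)‖ ^ 2) := by
    simp [inner_neg_left, inner_neg_right, real_inner_self_eq_norm_sq]
    ring
  rw [← hval]
  exact key.congr (fun y => (heq y).symm)

lemma aux_est {H : Type*} [NormedAddCommGroup H] [InnerProductSpace ℝ H]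
    (A : H →ₗ[ℝ] H) (hA : LinearMap.IsSymmetric A)
    (b : ℝ) (hb : 0 ≤ b) (z : ℝ → H)
    (hz : ∀ t ∈ Set.Icc 0 b, HasDerivWithinAt z (-(A (z t))) (Set.Icc 0 b) t)
    (hz' : ContinuousOn (fun t => A (z t)) (Set.Icc 0 b))
    (hne : ∀ t ∈ Set.Icc 0 b, z t ≠ 0) :
    ‖z 0‖ ^ 2 ≤ Real.exp (2 * (⟪A (z 0), z 0⟫ / ‖z 0‖ ^ 2) * b) * ‖z b‖ ^ 2 := by
  set g : ℝ → ℝ := fun t => ⟪A (z t), z t⟫ with hgdef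
  set N : ℝ → ℝ := fun t => ⟪z t, z t⟫ with hNdef
  set F : ℝ → ℝ := fun t => g t / N t with hFdef
  have hNnorm : ∀ t, N t = ‖z t‖ ^ 2 := fun t => real_inner_self_eq_norm_sq _
  have hNpos : ∀ t ∈ Set.Icc 0 b, 0 < N t := by
    intro t ht
    rw [hNnorm]
    exact pow_pos (norm_pos_iff.mpr (hne t ht)) 2
  have hN : ∀ t ∈ Set.Icc 0 b, HasDerivWithinAt N (-(2 * g t)) (Set.Icc 0 b) t := by
    intro t ht
    have h := HasDerivWithinAt.inner ℝ (hz t ht) (hz t ht)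
    have : ⟪z t, -(A (z t))⟫ + ⟪-(A (z t)), z t⟫ = -(2 * g t) := by
      simp [inner_neg_left, inner_neg_right, real_inner_comm (z t) (A (z t)), hgdef]
      ring
    rwa [this] at h
  have hg : ∀ t ∈ Set.Icc 0 b, HasDerivWithinAt g (-(2 * ‖A (z t)‖ ^ 2)) (Set.Icc 0 b) t :=
    fun t ht => deriv_inner_Az A hA _ z t (hz t ht) (hz' t ht)
  have hF : ∀ t ∈ Set.Icc 0 b, HasDerivWithinAt F
      ((-(2 * ‖A (z t)‖ ^ 2) * N t - g t * (-(2 * g t))) / N t ^ 2) (Set.Icc 0 b) t :=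
    fun t ht => (hg t ht).div (hN t ht) (hNpos t ht).ne'
  have hF_nonpos : ∀ t ∈ Set.Icc 0 b,
      (-(2 * ‖A (z t)‖ ^ 2) * N t - g t * (-(2 * g t))) / N t ^ 2 ≤ 0 := by
    intro t ht
    apply div_nonpos_of_nonpos_of_nonneg _ (sq_nonneg _)
    have hCS : |⟪A (z t), z t⟫| ≤ ‖A (z t)‖ * ‖z t‖ := abs_real_inner_le_norm _ _
    have : g t ^ 2 ≤ ‖A (z t)‖ ^ 2 * N t := by
      have h2 : g t ^ 2 ≤ (‖A (z t)‖ * ‖z t‖) ^ 2 := by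
        rw [← sq_abs]
        exact pow_le_pow_left₀ (abs_nonneg _) hCS 2
      rw [hNnorm]
      nlinarith
    nlinarith
  have hFanti : AntitoneOn F (Set.Icc 0 b) := by
    apply antitoneOn_of_deriv_nonpos (convex_Icc 0 b)
    · exact fun t ht => (hF t ht).continuousWithinAt
    · exact fun t ht => ((hF t (interior_subset ht)).differentiableWithinAt).mono interior_subset
    · intro t ht
      have hmem : Set.Icc 0 b ∈ 𝓝 t := mem_interior_iff_mem_nhds.mp ht
      rw [((hF t (interior_subset ht)).hasDerivAt hmem).deriv]
      exact hF_nonpos t (interior_subset ht)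
  set C : ℝ := ⟪A (z 0), z 0⟫ / ‖z 0‖ ^ 2 with hCdef
  have hC0 : F 0 = C := by simp only [hFdef, hNnorm, hCdef, hgdef]
  set φ : ℝ → ℝ := fun t => Real.exp (2 * C * t) * N t with hφdef
  have hφ : ∀ t ∈ Set.Icc 0 b, HasDerivWithinAt φ
      (Real.exp (2 * C * t) * (2 * C) * N t + Real.exp (2 * C * t) * -(2 * g t))
      (Set.Icc 0 b) t := by
    intro t ht
    have he : HasDerivAt (fun y => Real.exp (2 * C * y)) (Real.exp (2 * C * t) * (2 * C)) t := by
      simpa using (((hasDerivAt_id t).const_mul (2 * C)).exp)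
    exact he.hasDerivWithinAt.mul (hN t ht)
  have hφmono : MonotoneOn φ (Set.Icc 0 b) := by
    apply monotoneOn_of_deriv_nonneg (convex_Icc 0 b)
    · exact fun t ht => (hφ t ht).continuousWithinAt
    · exact fun t ht => ((hφ t (interior_subset ht)).differentiableWithinAt).mono interior_subset
    · intro t ht
      have hmem : Set.Icc 0 b ∈ 𝓝 t := mem_interior_iff_mem_nhds.mp ht
      rw [((hφ t (interior_subset ht)).hasDerivAt hmem).deriv]
      have ht' := interior_subset ht
      have hFle : F t ≤ C := hC0 ▸ hFanti (Set.left_mem_Icc.mpr hb) ht' ht'.1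
      have hgle : g t ≤ C * N t := by
        have := (div_le_iff₀ (hNpos t ht')).mp hFle
        linarith
      have hexp := (Real.exp_pos (2 * C * t)).le
      nlinarith [hNpos t ht']
  have h0b : (0:ℝ) ∈ Set.Icc 0 b := Set.left_mem_Icc.mpr hb
  have hbb : b ∈ Set.Icc 0 b := Set.right_mem_Icc.mpr hb
  have := hφmono h0b hbb hb
  simp only [hφdef] at this
  rw [mul_zero, Real.exp_zero, one_mul] at this
  calc ‖z 0‖ ^ 2 = N 0 := (hNnorm 0).symm
    _ ≤ Real.exp (2 * C * b) * N b := this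
    _ = Real.exp (2 * C * b) * ‖z b‖ ^ 2 := by rw [hNnorm]


/-- Log-convexity (backward uniqueness) estimate: if `A` is self-adjoint and `z` is a C¹
solution of `z' = -A z` with `z(0) ≠ 0`, then
`‖z(0)‖ ≤ exp((⟪A z(0), z(0)⟫ / ‖z(0)‖²) T) ‖z(T)‖`. -/
theorem stmt3 {H : Type*} [NormedAddCommGroup H] [InnerProductSpace ℝ H]
    (A : H →ₗ[ℝ] H) (hA : LinearMap.IsSymmetric A)
    (T : ℝ) (hT : 0 < T) (z : ℝ → H)
    (hz : ∀ t ∈ Set.Icc 0 T, HasDerivWithinAt z (-(A (z t))) (Set.Icc 0 T) t)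
    (hz' : ContinuousOn (fun t => A (z t)) (Set.Icc 0 T))
    (hz0 : z 0 ≠ 0) :
    ‖z 0‖ ≤ Real.exp ((⟪A (z 0), z 0⟫ / ‖z 0‖^2) * T) * ‖z T‖ := by

  set C : ℝ := ⟪A (z 0), z 0⟫ / ‖z 0‖ ^ 2 with hCdef
  -- the estimate on any subinterval [0, t] where z is nonvanishing
  have key2 : ∀ t ∈ Set.Icc 0 T, (∀ s ∈ Set.Icc 0 t, z s ≠ 0) →
      ‖z 0‖ ^ 2 ≤ Real.exp (2 * C * t) * ‖z t‖ ^ 2 := by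
    intro t ht hnz
    have hsub : Set.Icc (0:ℝ) t ⊆ Set.Icc 0 T := Set.Icc_subset_Icc le_rfl ht.2
    exact aux_est A hA t ht.1 z
      (fun s hs => (hz s (hsub hs)).mono hsub) (hz'.mono hsub) hnz
  -- continuity of z
  have hzc : ContinuousOn z (Set.Icc 0 T) := fun t ht => (hz t ht).continuousWithinAt
  -- set of times up to which z is nonvanishing
  set S : Set ℝ := {t | t ∈ Set.Icc 0 T ∧ ∀ s ∈ Set.Icc 0 t, z s ≠ 0} with hSdef
  have h0S : (0:ℝ) ∈ S := ⟨Set.left_mem_Icc.mpr hT.le, by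
    intro s hs
    rw [Set.Icc_self, Set.mem_singleton_iff] at hs
    rwa [hs]⟩
  have hSbdd : BddAbove S := ⟨T, fun t ht => ht.1.2⟩
  set c : ℝ := sSup S with hcdef
  have hc0 : 0 ≤ c := le_csSup hSbdd h0S
  have hcT : c ≤ T := csSup_le ⟨0, h0S⟩ fun t ht => ht.1.2
  have hcIcc : c ∈ Set.Icc 0 T := ⟨hc0, hcT⟩
  have key1 : ∀ t, 0 ≤ t → t < c → z t ≠ 0 := by
    intro t ht0 htc
    obtain ⟨u, huS, htu⟩ := exists_lt_of_lt_csSup ⟨0, h0S⟩ htc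
    exact huS.2 t ⟨ht0, htu.le⟩
  -- the estimate holds at c by continuity
  have key3 : ‖z 0‖ ^ 2 ≤ Real.exp (2 * C * c) * ‖z c‖ ^ 2 := by
    rcases eq_or_lt_of_le hc0 with hc0' | hc0'
    · rw [← hc0', mul_zero, Real.exp_zero, one_mul]
    · have hcont : ContinuousWithinAt (fun t => Real.exp (2 * C * t) * ‖z t‖ ^ 2)
          (Set.Icc 0 T) c := by
        apply ContinuousWithinAt.mul
        · exact (Real.continuous_exp.comp (continuous_const.mul continuous_id)).continuousWithinAt
        · exact ((hzc c hcIcc).norm.pow 2)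
      have hten : Filter.Tendsto (fun t => Real.exp (2 * C * t) * ‖z t‖ ^ 2)
          (𝓝[Set.Ico 0 c] c) (𝓝 (Real.exp (2 * C * c) * ‖z c‖ ^ 2)) :=
        hcont.mono_left (nhdsWithin_mono _ (Set.Ico_subset_Icc_self.trans
          (Set.Icc_subset_Icc le_rfl hcT)))
      have hne : (𝓝[Set.Ico 0 c] c).NeBot := by
        rw [nhdsWithin_Ico_eq_nhdsLT hc0']
        exact nhdsLT_neBot c
      refine ge_of_tendsto hten ?_
      filter_upwards [self_mem_nhdsWithin] with t ht
      exact key2 t ⟨ht.1, ht.2.le.trans hcT⟩ fun s hs => key1 s hs.1 (lt_of_le_of_lt hs.2 ht.2)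
  have hzc_ne : z c ≠ 0 := by
    intro h
    rw [h, norm_zero] at key3
    simp at key3
    exact hz0 key3
  -- c = T
  have hcT' : c = T := by
    by_contra hne'
    have hclt : c < T := lt_of_le_of_ne hcT hne'
    have hcw := hzc c hcIcc
    rw [Metric.continuousWithinAt_iff] at hcw
    obtain ⟨δ, hδ, hball⟩ := hcw ‖z c‖ (norm_pos_iff.mpr hzc_ne)
    set u : ℝ := min T (c + δ / 2) with hudef
    have hcu : c < u := lt_min hclt (by linarith)
    have huS : u ∈ S := by
      constructor
      · exact ⟨hc0.trans hcu.le, min_le_left _ _⟩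
      · intro s hs
        rcases le_or_gt s c with hsc | hsc
        · rcases eq_or_lt_of_le hsc with h | h
          · rw [h]; exact hzc_ne
          · exact key1 s hs.1 h
        · have hsT : s ∈ Set.Icc 0 T := ⟨hs.1, hs.2.trans (min_le_left _ _)⟩
          have hsd : dist s c < δ := by
            rw [Real.dist_eq, abs_of_nonneg (by linarith)]
            have : s ≤ c + δ / 2 := hs.2.trans (min_le_right _ _)
            linarith
          have := hball hsT hsd
          intro h0
          rw [h0, dist_eq_norm, zero_sub, norm_neg] at this
          exact lt_irrefl _ this
    have := le_csSup hSbdd huS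
    exact absurd this (not_le.mpr hcu)
  rw [hcT'] at key3
  -- conclude by taking square roots
  have hexp : Real.exp (2 * C * T) = Real.exp (C * T) ^ 2 := by
    rw [sq, ← Real.exp_add]
    ring_nf
  rw [hexp] at key3
  have h1 : ‖z 0‖ ^ 2 ≤ (Real.exp (C * T) * ‖z T‖) ^ 2 := by rw [mul_pow]; exact key3
  have h2 : 0 ≤ Real.exp (C * T) * ‖z T‖ := by positivity
  nlinarith [norm_nonneg (z 0)]
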